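/- The map ¥_x : B(H_S)^{G_x} → (B(H_S) ⊗ B(L²(X)))^G, A ↦ ∑_{gG_x} U_S(g) A U_S(g)* ⊗ P_{g·x}, is a unital injective *-algebra homomorphism. -/

import Mathlib

open scoped TensorProduct
set_option maxHeartbeats 1000000
set_option synthInstance.maxHeartbeats 400000
noncomputable section

/-- `L²(X)`: the complex Hilbert space of functions `X → ℂ`. -/
abbrev L2 (X : Type*) [Fintype X] := EuclideanSpace ℂ X

/-- The permutation representation of `G` on `L²(X)`, `(g·f)(x) = f(g⁻¹·x)`, as a linear map. -/
def UR_lin {G X : Type*} [Group G] [Fintype X] [MulAction G X] (g : G) :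
    L2 X →ₗ[ℂ] L2 X where
  toFun f := WithLp.toLp 2 (fun y => f (g⁻¹ • y))
  map_add' f₁ f₂ := by ext y; simp
  map_smul' c f := by ext y; simp

/-- The permutation (unitary) representation of `G` on `L²(X)`. -/
def UR (G X : Type*) [Group G] [Fintype X] [MulAction G X] :
    G →* (L2 X →L[ℂ] L2 X) where
  toFun g := (UR_lin g).toContinuousLinearMap
  map_one' := by ext f y; simp [UR_lin] <;> rw [inv_one, one_smul]
  map_mul' g h := by ext f y; simp [UR_lin] <;> rw [mul_smul]

/-- The indicator function `δ_y ∈ L²(X)`. -/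
def delta {X : Type*} [Fintype X] [DecidableEq X] (y : X) : L2 X :=
  EuclideanSpace.single y (1:ℂ)

/-- The rank-one projection onto the indicator function `δ_y`. -/
def Pproj {X : Type*} [Fintype X] [DecidableEq X] (y : X) : L2 X →L[ℂ] L2 X :=
  (innerSL ℂ (delta y)).smulRight (delta y)

/-- Invariance of an operator under a subgroup, `U_S(h) A U_S(h)⁻¹ = A` for all `h ∈ S`. -/
def InvUnder {G HS : Type*} [Group G] [NormedAddCommGroup HS] [InnerProductSpace ℂ HS]
    (US : G →* (HS →L[ℂ] HS)) (S : Subgroup G) (A : HS →L[ℂ] HS) : Prop :=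
  ∀ h ∈ S, US h * A * US h⁻¹ = A

/-- The relativisation map `¥ₓ`, with canonical coset representatives. -/
def yen {G X HS : Type*} [Group G] [Finite G] [Fintype X] [DecidableEq X] [MulAction G X]
    [NormedAddCommGroup HS] [InnerProductSpace ℂ HS]
    (US : G →* (HS →L[ℂ] HS)) (x : X) (A : HS →L[ℂ] HS) :
    (HS →L[ℂ] HS) ⊗[ℂ] (L2 X →L[ℂ] L2 X) :=
  letI : Fintype (G ⧸ MulAction.stabilizer G x) := Fintype.ofFinite _
  ∑ c : G ⧸ MulAction.stabilizer G x,
    (US c.out * A * US c.out⁻¹) ⊗ₜ[ℂ] Pproj (c.out • x)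

section Aux

variable {X : Type*} [Fintype X] [DecidableEq X]

lemma Pproj_apply (y : X) (f : L2 X) :
    Pproj y f = (inner ℂ (delta y) f : ℂ) • delta y := rfl

lemma inner_delta (y z : X) : (inner ℂ (delta y) (delta z) : ℂ) = if y = z then 1 else 0 := by
  simp [delta, EuclideanSpace.inner_single_left, EuclideanSpace.single_apply, eq_comm]

lemma Pproj_mul (y z : X) : Pproj y * Pproj z = if y = z then Pproj y else 0 := by
  refine ContinuousLinearMap.ext fun f => ?_
  rw [ContinuousLinearMap.mul_apply, Pproj_apply, Pproj_apply, inner_smul_right, inner_delta]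
  by_cases h : y = z
  · subst h; simp [Pproj_apply]
  · simp [h, Ne.symm h]

lemma Pproj_sum : ∑ y : X, Pproj y = 1 := by
  refine ContinuousLinearMap.ext fun f => ?_
  rw [ContinuousLinearMap.sum_apply, ContinuousLinearMap.one_apply]
  have h2 := (EuclideanSpace.basisFun X ℂ).sum_repr f
  simp only [EuclideanSpace.basisFun_repr, EuclideanSpace.basisFun_apply] at h2
  calc ∑ y : X, Pproj y f = ∑ y : X, f y • EuclideanSpace.single y (1:ℂ) := by
        refine Finset.sum_congr rfl fun y _ => ?_
        rw [Pproj_apply, delta, EuclideanSpace.inner_single_left]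
        simp
    _ = f := h2

lemma Pproj_star (y : X) : star (Pproj y) = Pproj y := by
  rw [ContinuousLinearMap.star_eq_adjoint, eq_comm, ContinuousLinearMap.eq_adjoint_iff]
  intro f g
  simp only [Pproj_apply, inner_smul_left, inner_smul_right, inner_conj_symm,
    starRingEnd_self_apply]
  rw [mul_comm]

variable {G : Type*} [Group G] [MulAction G X] (x : X)

lemma out_smul_eq (g : G) :
    (QuotientGroup.mk g : G ⧸ MulAction.stabilizer G x).out • x = g • x := by
  have h : ((QuotientGroup.mk g : G ⧸ MulAction.stabilizer G x).out :
      G ⧸ MulAction.stabilizer G x) = QuotientGroup.mk g := Quotient.out_eq _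
  have h2 := (QuotientGroup.eq (s := MulAction.stabilizer G x)).mp h
  have h3 : ((QuotientGroup.mk g : G ⧸ MulAction.stabilizer G x).out⁻¹ * g) • x = x := h2
  rw [mul_smul] at h3
  calc (QuotientGroup.mk g : G ⧸ MulAction.stabilizer G x).out • x
      = (QuotientGroup.mk g : G ⧸ MulAction.stabilizer G x).out •
        ((QuotientGroup.mk g : G ⧸ MulAction.stabilizer G x).out⁻¹ • g • x) := by rw [h3]
    _ = g • x := by rw [smul_inv_smul]

lemma out_smul_inj {c d : G ⧸ MulAction.stabilizer G x} (h : c.out • x = d.out • x) : c = d := by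
  rw [← Quotient.out_eq c, ← Quotient.out_eq d]
  refine (QuotientGroup.eq).mpr ?_
  show (c.out⁻¹ * d.out) • x = x
  rw [mul_smul, ← h, inv_smul_smul]

lemma out_smul_bij [MulAction.IsPretransitive G X] :
    Function.Bijective (fun c : G ⧸ MulAction.stabilizer G x => c.out • x) := by
  constructor
  · intro c d h; exact out_smul_inj x h
  · intro y
    obtain ⟨g, hg⟩ := MulAction.exists_smul_eq G x y
    exact ⟨QuotientGroup.mk g, by simpa [out_smul_eq] using hg⟩

lemma one_out_smul :
    (QuotientGroup.mk (1 : G) : G ⧸ MulAction.stabilizer G x).out • x = x := by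
  rw [out_smul_eq, one_smul]

lemma one_out_mem :
    (QuotientGroup.mk (1 : G) : G ⧸ MulAction.stabilizer G x).out ∈ MulAction.stabilizer G x :=
  MulAction.mem_stabilizer_iff.mpr (one_out_smul x)

variable {HS : Type*} [NormedAddCommGroup HS] [InnerProductSpace ℂ HS]

lemma conj_mul_conj (US : G →* (HS →L[ℂ] HS)) (g : G) (A B : HS →L[ℂ] HS) :
    (US g * A * US g⁻¹) * (US g * B * US g⁻¹) = US g * (A * B) * US g⁻¹ := by
  have h : US g⁻¹ * US g = 1 := by rw [← map_mul, inv_mul_cancel, map_one]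
  simp only [mul_assoc]
  rw [← mul_assoc (US g⁻¹) (US g), h, one_mul]

end Aux

/-- `¥ₓ` is a unital injective *-algebra homomorphism on `B(H_S)^{G_x}`. -/
theorem stmt6 {G X HS : Type*} [Group G] [Finite G] [Fintype X] [DecidableEq X]
    [MulAction G X] [MulAction.IsPretransitive G X]
    [NormedAddCommGroup HS] [InnerProductSpace ℂ HS] [CompleteSpace HS]
    (US : G →* (HS →L[ℂ] HS))
    (hU : ∀ g : G, ContinuousLinearMap.adjoint (US g) = US g⁻¹)
    (x : X) :
    (∀ A B : HS →L[ℂ] HS, InvUnder US (MulAction.stabilizer G x) A →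
        InvUnder US (MulAction.stabilizer G x) B →
        yen US x (A * B) = yen US x A * yen US x B) ∧
    yen US x (1 : HS →L[ℂ] HS) = 1 ∧
    (∀ A B : HS →L[ℂ] HS, InvUnder US (MulAction.stabilizer G x) A →
        InvUnder US (MulAction.stabilizer G x) B →
        yen US x (A + B) = yen US x A + yen US x B) ∧
    (∀ (c : ℂ) (A : HS →L[ℂ] HS), InvUnder US (MulAction.stabilizer G x) A →
        yen US x (c • A) = c • yen US x A) ∧
    (∀ A : HS →L[ℂ] HS, InvUnder US (MulAction.stabilizer G x) A →
        letI : Fintype (G ⧸ MulAction.stabilizer G x) := Fintype.ofFinite _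
        yen US x (star A) = ∑ c : G ⧸ MulAction.stabilizer G x,
          star (US c.out * A * US c.out⁻¹) ⊗ₜ[ℂ] star (Pproj (c.out • x))) ∧
    (∀ A B : HS →L[ℂ] HS, InvUnder US (MulAction.stabilizer G x) A →
        InvUnder US (MulAction.stabilizer G x) B →
        yen US x A = yen US x B → A = B) := by
  letI : Fintype (G ⧸ MulAction.stabilizer G x) := Fintype.ofFinite _
  have hstar : ∀ g : G, star (US g) = US g⁻¹ := fun g => by
    rw [ContinuousLinearMap.star_eq_adjoint, hU]
  refine ⟨?_, ?_, ?_, ?_, ?_, ?_⟩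
  · -- multiplicative
    intro A B _ _
    unfold yen
    refine Eq.trans ?_ (Finset.sum_mul_sum Finset.univ Finset.univ
      (fun c : G ⧸ MulAction.stabilizer G x =>
        (US c.out * A * US c.out⁻¹) ⊗ₜ[ℂ] Pproj (c.out • x))
      (fun d : G ⧸ MulAction.stabilizer G x =>
        (US d.out * B * US d.out⁻¹) ⊗ₜ[ℂ] Pproj (d.out • x))).symm
    refine Finset.sum_congr rfl fun c _ => ?_
    have hterm : ∀ d : G ⧸ MulAction.stabilizer G x,
        ((US c.out * A * US c.out⁻¹) ⊗ₜ[ℂ] Pproj (c.out • x)) *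
          ((US d.out * B * US d.out⁻¹) ⊗ₜ[ℂ] Pproj (d.out • x)) =
        if d = c then (US c.out * (A * B) * US c.out⁻¹) ⊗ₜ[ℂ] Pproj (c.out • x) else 0 := by
      intro d
      rw [Algebra.TensorProduct.tmul_mul_tmul, Pproj_mul]
      by_cases hd : d = c
      · subst hd; simp [conj_mul_conj]
      · have hne : ¬ c.out • x = d.out • x := fun h => hd ((out_smul_inj x h).symm)
        simp [hne, hd]
    rw [Finset.sum_congr rfl fun d _ => hterm d, Finset.sum_ite_eq' Finset.univ c]
    simp
  · -- unital
    unfold yen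
    have h1 : ∀ c : G ⧸ MulAction.stabilizer G x,
        (US c.out * 1 * US c.out⁻¹) ⊗ₜ[ℂ] Pproj (c.out • x)
          = (1 : HS →L[ℂ] HS) ⊗ₜ[ℂ] Pproj (c.out • x) := by
      intro c
      rw [mul_one, ← map_mul, mul_inv_cancel, map_one]
    rw [Finset.sum_congr rfl fun c _ => h1 c, ← TensorProduct.tmul_sum]
    have h2 : ∑ c : G ⧸ MulAction.stabilizer G x, Pproj (c.out • x) = ∑ y : X, Pproj y :=
      Fintype.sum_bijective _ (out_smul_bij x) _ _ (fun c => rfl)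
    rw [h2, Pproj_sum, Algebra.TensorProduct.one_def]
  · -- additive
    intro A B _ _
    unfold yen
    rw [← Finset.sum_add_distrib]
    refine Finset.sum_congr rfl fun c _ => ?_
    rw [← TensorProduct.add_tmul, mul_add, add_mul]
  · -- smul
    intro c A _
    unfold yen
    rw [Finset.smul_sum]
    refine Finset.sum_congr rfl fun d _ => ?_
    rw [TensorProduct.smul_tmul']
    congr 1
    rw [mul_smul_comm, smul_mul_assoc]
  · -- star
    intro A _
    unfold yen
    refine Finset.sum_congr rfl fun c _ => ?_
    rw [Pproj_star]
    congr 1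
    rw [star_mul, star_mul, hstar, hstar, inv_inv, mul_assoc]
  · -- injective
    intro A B hA hB h
    set Q := G ⧸ MulAction.stabilizer G x
    let φ : (L2 X →L[ℂ] L2 X) →ₗ[ℂ] ℂ :=
      { toFun := fun T => (inner ℂ (delta x) (T (delta x)) : ℂ)
        map_add' := fun T S => by simp [inner_add_right]
        map_smul' := fun c T => by simp [inner_smul_right] }
    let F : (HS →L[ℂ] HS) ⊗[ℂ] (L2 X →L[ℂ] L2 X) →ₗ[ℂ] (HS →L[ℂ] HS) :=
      (TensorProduct.rid ℂ (HS →L[ℂ] HS)).toLinearMap.comp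
        (LinearMap.lTensor (HS →L[ℂ] HS) φ)
    have hφP : ∀ y : X, φ (Pproj y) = if y = x then 1 else 0 := by
      intro y
      show (inner ℂ (delta x) (Pproj y (delta x)) : ℂ) = _
      rw [Pproj_apply, inner_smul_right, inner_delta, inner_delta]
      by_cases hy : y = x
      · subst hy; simp
      · simp [hy, Ne.symm hy]
    have hF : ∀ C : HS →L[ℂ] HS, InvUnder US (MulAction.stabilizer G x) C →
        F (yen US x C) = C := by
      intro C hC
      unfold yen
      rw [map_sum]
      have hterm : ∀ c : Q,
          F ((US c.out * C * US c.out⁻¹) ⊗ₜ[ℂ] Pproj (c.out • x)) =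
          if c = (QuotientGroup.mk (1 : G) : Q) then US c.out * C * US c.out⁻¹ else 0 := by
        intro c
        show (TensorProduct.rid ℂ (HS →L[ℂ] HS))
            (LinearMap.lTensor (HS →L[ℂ] HS) φ
              ((US c.out * C * US c.out⁻¹) ⊗ₜ[ℂ] Pproj (c.out • x))) = _
        rw [LinearMap.lTensor_tmul, TensorProduct.rid_tmul, hφP]
        by_cases hc : c = (QuotientGroup.mk (1 : G) : Q)
        · subst hc; simp [one_out_smul x]
        · have : ¬ c.out • x = x := by
            intro hcx
            exact hc (out_smul_inj x (by rw [hcx, one_out_smul x]))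
          simp [this, hc]
      rw [Finset.sum_congr rfl fun c _ => hterm c]
      simp only [Finset.sum_ite_eq', Finset.mem_univ, if_true]
      exact hC _ (one_out_mem x)
    rw [← hF A hA, ← hF B hB, h]

end
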